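/- Let k ≥ 2 and let (θ_n)_{n≥1} be holomorphic automorphisms of ℂ^k such that for every integer m ≥ 1 one has Σ_{n≥1} sup_{‖z‖≤m} ‖θ_n(z) − z‖ < ∞. Then the compositions F_n = θ_1 ∘ θ_2 ∘ ⋯ ∘ θ_n converge uniformly on compact subsets of ℂ^k to an injective holomorphic map F : ℂ^k → ℂ^k. -/

import Mathlib

/-- `thcomp θ n = θ_0 ∘ θ_1 ∘ ⋯ ∘ θ_n` (the sequence is 0-indexed). -/
noncomputable def thcomp {k : ℕ} (θ : ℕ → ((Fin k → ℂ) ≃ (Fin k → ℂ))) :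
    ℕ → (Fin k → ℂ) → (Fin k → ℂ)
  | 0 => ⇑(θ 0)
  | n + 1 => thcomp θ n ∘ ⇑(θ (n + 1))


open Metric Set Filter


variable {X E : Type*} [NormedAddCommGroup X] [NormedSpace ℂ X]
  [NormedAddCommGroup E] [NormedSpace ℂ E]

/-- Lipschitz estimate for an entire map bounded on a ball, via the Schwarz lemma. -/
lemma lip_aux {f : X → E} (hf : Differentiable ℂ f) {M r R : ℝ} (hM : 0 ≤ M)
    (hrR : r < R) (hb : ∀ x : X, ‖x‖ ≤ R → ‖f x‖ ≤ M) {z w : X}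
    (hz : ‖z‖ ≤ r) (hw : ‖w‖ ≤ r) :
    ‖f z - f w‖ ≤ (2 * M + 1) / (R - r) * ‖z - w‖ := by
  have hRr : 0 < R - r := sub_pos.2 hrR
  rcases eq_or_ne z w with rfl | hzw
  · simp only [sub_self, norm_zero, mul_zero]
    positivity
  have hn : 0 < ‖z - w‖ := norm_pos_iff.2 (sub_ne_zero.2 hzw)
  rcases le_or_gt (R - r) ‖z - w‖ with hcase | hcase
  · have h1 : (2 * M + 1) / (R - r) * (R - r) = 2 * M + 1 := div_mul_cancel₀ _ hRr.ne'
    have h2 : (2 * M + 1) / (R - r) * (R - r) ≤ (2 * M + 1) / (R - r) * ‖z - w‖ :=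
      mul_le_mul_of_nonneg_left hcase (by positivity)
    have h3 : ‖f z - f w‖ ≤ M + M :=
      (norm_sub_le _ _).trans (add_le_add (hb z (hz.trans hrR.le)) (hb w (hw.trans hrR.le)))
    linarith
  · set g : ℂ → E := fun t => f (w + t • (z - w)) with hg
    have hgd : Differentiable ℂ g :=
      hf.comp (((differentiable_id).smul_const (z - w)).const_add w)
    set R₁ : ℝ := (R - r) / ‖z - w‖ with hR₁
    have hR₁0 : 0 < R₁ := div_pos hRr hn
    have hmaps : MapsTo g (ball 0 R₁) (ball (g 0) (2 * M + 1)) := by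
      intro t ht
      rw [mem_ball_zero_iff] at ht
      have hgt : ∀ s : ℂ, ‖s‖ < R₁ → ‖g s‖ ≤ M := by
        intro s hs
        apply hb
        have : ‖s • (z - w)‖ ≤ R - r := by
          rw [norm_smul]
          calc ‖s‖ * ‖z - w‖ ≤ R₁ * ‖z - w‖ := by
                exact mul_le_mul_of_nonneg_right hs.le (norm_nonneg _)
            _ = R - r := div_mul_cancel₀ _ hn.ne'
        calc ‖w + s • (z - w)‖ ≤ ‖w‖ + ‖s • (z - w)‖ := norm_add_le _ _
          _ ≤ r + (R - r) := add_le_add hw this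
          _ = R := by ring
      rw [mem_ball, dist_eq_norm]
      calc ‖g t - g 0‖ ≤ ‖g t‖ + ‖g 0‖ := norm_sub_le _ _
        _ ≤ M + M := add_le_add (hgt t ht) (hgt 0 (by simpa using hR₁0))
        _ < 2 * M + 1 := by linarith
    have h1 : (1 : ℂ) ∈ ball (0 : ℂ) R₁ := by
      rw [mem_ball_zero_iff]
      simp only [norm_one]
      rw [hR₁, lt_div_iff₀ hn, one_mul]
      exact hcase
    have := Complex.dist_le_div_mul_dist_of_mapsTo_ball hgd.differentiableOn (hmaps.mono_right ball_subset_closedBall) h1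
    have hg1 : g 1 = f z := by simp [hg]
    have hg0 : g 0 = f w := by simp [hg]
    rw [hg1, hg0, dist_eq_norm] at this
    have hd10 : dist (1 : ℂ) 0 = 1 := by simp
    rw [hd10, mul_one] at this
    calc ‖f z - f w‖ ≤ (2 * M + 1) / R₁ := this
      _ = (2 * M + 1) / (R - r) * ‖z - w‖ := by
          rw [hR₁]
          field_simp


variable {X E : Type*} [NormedAddCommGroup X] [NormedSpace ℂ X]
  [NormedAddCommGroup E] [NormedSpace ℂ E]

/-- Cauchy-type estimate: an entire map small on a ball has small derivative on a
smaller ball. -/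
lemma deriv_aux {f : X → E} (hf : Differentiable ℂ f) {ε r R : ℝ} (hε : 0 ≤ ε)
    (hrR : r < R) (hb : ∀ x : X, ‖x‖ ≤ R → ‖f x‖ ≤ ε) {z : X} (hz : ‖z‖ ≤ r) :
    ‖fderiv ℂ f z‖ ≤ 2 * ε / (R - r) := by
  have hRr : 0 < R - r := sub_pos.2 hrR
  apply ContinuousLinearMap.opNorm_le_bound _ (by positivity)
  intro v
  rcases eq_or_ne v 0 with rfl | hv
  · simp
  have hn : 0 < ‖v‖ := norm_pos_iff.2 hv
  have main : ∀ σ : ℝ, 0 < σ → ‖fderiv ℂ f z v‖ ≤ (2 * ε + σ) / (R - r) * ‖v‖ := by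
    intro σ hσ
    set g : ℂ → E := fun t => f (z + t • v) with hg
    have hgd : Differentiable ℂ g := hf.comp (((differentiable_id).smul_const v).const_add z)
    set R₁ : ℝ := (R - r) / ‖v‖ with hR₁
    have hR₁0 : 0 < R₁ := div_pos hRr hn
    have hgt : ∀ s : ℂ, ‖s‖ < R₁ → ‖g s‖ ≤ ε := by
      intro s hs
      apply hb
      have h1 : ‖s • v‖ ≤ R - r := by
        rw [norm_smul]
        calc ‖s‖ * ‖v‖ ≤ R₁ * ‖v‖ := mul_le_mul_of_nonneg_right hs.le (norm_nonneg _)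
          _ = R - r := div_mul_cancel₀ _ hn.ne'
      calc ‖z + s • v‖ ≤ ‖z‖ + ‖s • v‖ := norm_add_le _ _
        _ ≤ r + (R - r) := add_le_add hz h1
        _ = R := by ring
    have hmaps : MapsTo g (ball 0 R₁) (ball (g 0) (2 * ε + σ)) := by
      intro t ht
      rw [mem_ball_zero_iff] at ht
      rw [mem_ball, dist_eq_norm]
      calc ‖g t - g 0‖ ≤ ‖g t‖ + ‖g 0‖ := norm_sub_le _ _
        _ ≤ ε + ε := add_le_add (hgt t ht) (hgt 0 (by simpa using hR₁0))
        _ < 2 * ε + σ := by linarith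
    have hline : HasDerivAt (fun t : ℂ => z + t • v) v 0 := by
      simpa using ((hasDerivAt_id (0 : ℂ)).smul_const v).const_add z
    have hder : HasDerivAt g (fderiv ℂ f z v) 0 := by
      have hFd : HasFDerivAt f (fderiv ℂ f z) ((fun t : ℂ => z + t • v) 0) := by
        simpa using (hf z).hasFDerivAt
      exact hFd.comp_hasDerivAt 0 hline
    have := Complex.norm_deriv_le_div_of_mapsTo_ball hgd.differentiableOn (hmaps.mono_right ball_subset_closedBall) hR₁0
    rw [hder.deriv] at this
    calc ‖fderiv ℂ f z v‖ ≤ (2 * ε + σ) / R₁ := this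
      _ = (2 * ε + σ) / (R - r) * ‖v‖ := by rw [hR₁]; field_simp
  apply le_of_forall_pos_le_add
  intro η hη
  have h := main (η * (R - r) / ‖v‖) (by positivity)
  calc ‖fderiv ℂ f z v‖ ≤ (2 * ε + η * (R - r) / ‖v‖) / (R - r) * ‖v‖ := h
    _ = 2 * ε / (R - r) * ‖v‖ + η := by field_simp
/-- `tail θ a d = θ_a ∘ θ_{a+1} ∘ ⋯ ∘ θ_{a+d}`. -/
noncomputable def tail {k : ℕ} (θ : ℕ → ((Fin k → ℂ) ≃ (Fin k → ℂ))) :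
    ℕ → ℕ → (Fin k → ℂ) → (Fin k → ℂ)
  | a, 0 => ⇑(θ a)
  | a, d + 1 => ⇑(θ a) ∘ tail θ (a + 1) d

variable {k : ℕ} (θ : ℕ → ((Fin k → ℂ) ≃ (Fin k → ℂ)))

lemma tail_succ : ∀ (d a : ℕ), tail θ a (d + 1) = tail θ a d ∘ ⇑(θ (a + d + 1)) := by
  intro d
  induction d with
  | zero => intro a; rfl
  | succ d ih =>
    intro a
    show ⇑(θ a) ∘ tail θ (a + 1) (d + 1) = (⇑(θ a) ∘ tail θ (a + 1) d) ∘ ⇑(θ (a + (d + 1) + 1))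
    rw [ih (a + 1), show a + 1 + d + 1 = a + (d + 1) + 1 by omega]
    rfl

lemma thcomp_eq : ∀ n, thcomp θ n = tail θ 0 n := by
  intro n
  induction n with
  | zero => rfl
  | succ n ih =>
    show thcomp θ n ∘ ⇑(θ (n + 1)) = tail θ 0 (n + 1)
    rw [ih, tail_succ θ n 0, Nat.zero_add]

lemma tail_split : ∀ (d e a : ℕ),
    tail θ a (d + e + 1) = tail θ a d ∘ tail θ (a + d + 1) e := by
  intro d
  induction d with
  | zero =>
    intro e a
    rw [show 0 + e + 1 = e + 1 by omega, show a + 0 + 1 = a + 1 by omega]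
    rfl
  | succ d ih =>
    intro e a
    rw [show d + 1 + e + 1 = (d + e + 1) + 1 by omega]
    show ⇑(θ a) ∘ tail θ (a + 1) (d + e + 1) = _
    rw [ih e (a + 1), show a + 1 + d + 1 = a + (d + 1) + 1 by omega]
    rfl

lemma tail_diff (hdiff : ∀ n, Differentiable ℂ (θ n)) :
    ∀ (d a : ℕ), Differentiable ℂ (tail θ a d) := by
  intro d
  induction d with
  | zero => intro a; exact hdiff a
  | succ d ih => intro a; exact (hdiff a).comp (ih (a + 1))

lemma thcomp_diff (hdiff : ∀ n, Differentiable ℂ (θ n)) :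
    ∀ n, Differentiable ℂ (thcomp θ n) := by
  intro n; rw [thcomp_eq]; exact tail_diff θ hdiff n 0

lemma thcomp_inj : ∀ n, Function.Injective (thcomp θ n) := by
  intro n
  induction n with
  | zero => exact (θ 0).injective
  | succ n ih => exact ih.comp (θ (n + 1)).injective

/-- Drift estimate: the tail compositions move points by at most the tail sum. -/
lemma tail_drift {c : ℕ → ℝ} {R r : ℝ} (hc : Summable c) (hcnn : ∀ n, 0 ≤ c n)
    (hbnd : ∀ n, ∀ z : Fin k → ℂ, ‖z‖ ≤ R → ‖θ n z - z‖ ≤ c n) :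
    ∀ (d a : ℕ) (z : Fin k → ℂ), r + (∑' j, c (j + a)) ≤ R → ‖z‖ ≤ r →
      ‖tail θ a d z - z‖ ≤ ∑' j, c (j + a) := by
  have hsumm : ∀ a, Summable fun j => c (j + a) := fun a => (summable_nat_add_iff a).2 hc
  have htnn : ∀ a, 0 ≤ ∑' j, c (j + a) := fun a => tsum_nonneg fun j => hcnn _
  have hrec : ∀ a, (∑' j, c (j + a)) = c a + ∑' j, c (j + (a + 1)) := by
    intro a
    rw [Summable.tsum_eq_zero_add (hsumm a)]
    simp only [Nat.zero_add]
    congr 1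
    apply tsum_congr
    intro j
    congr 1
    omega
  intro d
  induction d with
  | zero =>
    intro a z hra hz
    have hzR : ‖z‖ ≤ R := hz.trans (by linarith [htnn a])
    calc ‖tail θ a 0 z - z‖ = ‖θ a z - z‖ := rfl
      _ ≤ c a := hbnd a z hzR
      _ ≤ ∑' j, c (j + a) := by rw [hrec a]; linarith [htnn (a + 1)]
  | succ d ih =>
    intro a z hra hz
    have hstep : (∑' j, c (j + (a + 1))) ≤ ∑' j, c (j + a) := by
      rw [hrec a]; linarith [hcnn a]
    have hra' : r + ∑' j, c (j + (a + 1)) ≤ R := by linarith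
    set u := tail θ (a + 1) d z with hu_def
    have hu : ‖u - z‖ ≤ ∑' j, c (j + (a + 1)) := ih (a + 1) z hra' hz
    have hun : ‖u‖ ≤ R := by
      have h1 := norm_add_le (u - z) z
      rw [sub_add_cancel] at h1
      linarith
    calc ‖tail θ a (d + 1) z - z‖ = ‖θ a u - z‖ := rfl
      _ ≤ ‖θ a u - u‖ + ‖u - z‖ := by
          have := dist_triangle (θ a u) u z
          simpa [dist_eq_norm] using this
      _ ≤ c a + ∑' j, c (j + (a + 1)) := add_le_add (hbnd a u hun) hu
      _ = ∑' j, c (j + a) := (hrec a).symm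

section Main
variable {k : ℕ} (θ : ℕ → ((Fin k → ℂ) ≃ (Fin k → ℂ)))

lemma setup_lemma
    (hsum : ∀ m : ℕ, 1 ≤ m → ∃ c : ℕ → ℝ, Summable c ∧
      ∀ n : ℕ, ∀ z : Fin k → ℂ, ‖z‖ ≤ (m : ℝ) → ‖θ n z - z‖ ≤ c n)
    (m : ℕ) (hm : 1 ≤ m) :
    ∃ t : ℕ → ℝ, (∀ a, 0 ≤ t a) ∧ Filter.Tendsto t Filter.atTop (nhds 0) ∧
      ∃ N₀ : ℕ, ∀ a, N₀ ≤ a → t a ≤ 1 ∧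
        ∀ (d : ℕ) (z : Fin k → ℂ), ‖z‖ ≤ (m : ℝ) + 2 → ‖tail θ a d z - z‖ ≤ t a := by
  obtain ⟨c, hc, hbnd⟩ := hsum (m + 3) (by omega)
  have hbnd' : ∀ n, ∀ z : Fin k → ℂ, ‖z‖ ≤ (m : ℝ) + 3 → ‖θ n z - z‖ ≤ c n := by
    intro n z hz
    apply hbnd n z
    push_cast
    linarith
  have hcnn : ∀ n, 0 ≤ c n := by
    intro n
    refine (norm_nonneg _).trans (hbnd' n 0 ?_)
    rw [norm_zero]
    positivity
  refine ⟨fun a => ∑' j, c (j + a), fun a => tsum_nonneg fun _ => hcnn _,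
    tendsto_sum_nat_add c, ?_⟩
  have hev := (tendsto_sum_nat_add c).eventually (gt_mem_nhds one_pos)
  rw [Filter.eventually_atTop] at hev
  obtain ⟨N₀, hN₀⟩ := hev
  refine ⟨N₀, fun a ha => ⟨(hN₀ a ha).le, fun d z hz => ?_⟩⟩
  refine tail_drift θ hc hcnn hbnd' d a z ?_ hz
  have := (hN₀ a ha).le
  linarith

lemma key_lemma (hdiff : ∀ n, Differentiable ℂ (θ n))
    (hsum : ∀ m : ℕ, 1 ≤ m → ∃ c : ℕ → ℝ, Summable c ∧
      ∀ n : ℕ, ∀ z : Fin k → ℂ, ‖z‖ ≤ (m : ℝ) → ‖θ n z - z‖ ≤ c n)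
    (m : ℕ) (hm : 1 ≤ m) :
    ∃ (u : ℕ → ℝ) (N₁ : ℕ), Filter.Tendsto u Filter.atTop (nhds 0) ∧ (∀ N, 0 ≤ u N) ∧
      ∀ (N d : ℕ) (z : Fin k → ℂ), N₁ ≤ N → ‖z‖ ≤ (m : ℝ) →
        ‖thcomp θ (N + d) z - thcomp θ N z‖ ≤ u N := by
  obtain ⟨t, htnn, htend, N₀, hset⟩ := setup_lemma θ hsum m hm
  set P : (Fin k → ℂ) → (Fin k → ℂ) := tail θ 0 N₀ with hP
  obtain ⟨Mp, hMp⟩ := (isCompact_closedBall (0 : Fin k → ℂ) ((m : ℝ) + 3)).exists_bound_of_continuousOn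
    (tail_diff θ hdiff N₀ 0).continuous.continuousOn
  set Mp' := max Mp 0 with hMp'def
  have hMpnn : 0 ≤ Mp' := le_max_right _ _
  have hMp' : ∀ x : Fin k → ℂ, ‖x‖ ≤ (m : ℝ) + 3 → ‖P x‖ ≤ Mp' := fun x hx =>
    (hMp x (mem_closedBall_zero_iff.2 hx)).trans (le_max_left _ _)
  have hGb : ∀ a, N₀ ≤ a → ∀ d, ∀ x : Fin k → ℂ, ‖x‖ ≤ (m : ℝ) + 2 →
      ‖tail θ a d x‖ ≤ (m : ℝ) + 3 := by
    intro a ha d x hx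
    have h1 := (hset a ha).2 d x hx
    have h2 := norm_add_le (tail θ a d x - x) x
    rw [sub_add_cancel] at h2
    have := (hset a ha).1
    linarith
  have hGlip : ∀ a, N₀ ≤ a → ∀ d, ∀ x y : Fin k → ℂ, ‖x‖ ≤ (m : ℝ) + 1 → ‖y‖ ≤ (m : ℝ) + 1 →
      ‖tail θ a d x - tail θ a d y‖ ≤ (2 * ((m : ℝ) + 3) + 1) * ‖x - y‖ := by
    intro a ha d x y hx hy
    have := lip_aux (tail_diff θ hdiff d a) (M := (m : ℝ) + 3) (r := (m : ℝ) + 1)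
      (R := (m : ℝ) + 2) (by positivity) (by linarith) (fun w hw => hGb a ha d w hw) hx hy
    rwa [show ((m : ℝ) + 2) - ((m : ℝ) + 1) = 1 by ring, div_one] at this
  have hPlip : ∀ x y : Fin k → ℂ, ‖x‖ ≤ (m : ℝ) + 2 → ‖y‖ ≤ (m : ℝ) + 2 →
      ‖P x - P y‖ ≤ (2 * Mp' + 1) * ‖x - y‖ := by
    intro x y hx hy
    have := lip_aux (tail_diff θ hdiff N₀ 0) (M := Mp') (r := (m : ℝ) + 2)
      (R := (m : ℝ) + 3) hMpnn (by linarith) (fun w hw => hMp' w hw) hx hy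
    rwa [show ((m : ℝ) + 3) - ((m : ℝ) + 2) = 1 by ring, div_one] at this
  set Lg : ℝ := 2 * ((m : ℝ) + 3) + 1 with hLg
  set Lp : ℝ := 2 * Mp' + 1 with hLp
  have hLgnn : 0 ≤ Lg := by rw [hLg]; positivity
  have hLpnn : 0 ≤ Lp := by rw [hLp]; positivity
  refine ⟨fun N => Lp * Lg * t (N + 1), N₀ + 1, ?_, ?_, ?_⟩
  · have := (htend.comp (tendsto_add_atTop_nat 1)).const_mul (Lp * Lg)
    simpa using this
  · intro N
    exact mul_nonneg (mul_nonneg hLpnn hLgnn) (htnn _)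
  · intro N e z hN hz
    obtain ⟨d, rfl⟩ : ∃ d, N = N₀ + 1 + d := ⟨N - (N₀ + 1), by omega⟩
    cases e with
    | zero =>
      simp only [Nat.add_zero, sub_self, norm_zero]
      exact mul_nonneg (mul_nonneg hLpnn hLgnn) (htnn _)
    | succ e =>
      have h1 : thcomp θ (N₀ + 1 + d) = fun x => P (tail θ (N₀ + 1) d x) := by
        rw [thcomp_eq, show N₀ + 1 + d = N₀ + d + 1 by omega, tail_split θ N₀ d 0,
          Nat.zero_add]
        rfl
      have h2 : thcomp θ (N₀ + 1 + d + (e + 1)) =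
          fun x => P (tail θ (N₀ + 1) d (tail θ (N₀ + 1 + d + 1) e x)) := by
        rw [thcomp_eq, show N₀ + 1 + d + (e + 1) = N₀ + (d + e + 1) + 1 by omega,
          tail_split θ N₀ (d + e + 1) 0, Nat.zero_add, tail_split θ d e (N₀ + 1),
          show N₀ + 1 + d + 1 = N₀ + 1 + d + 1 by omega]
        rfl
      set w := tail θ (N₀ + 1 + d + 1) e z with hw_def
      have hw : ‖w - z‖ ≤ t (N₀ + 1 + d + 1) := (hset _ (by omega)).2 e z (by linarith)
      have ht1 : t (N₀ + 1 + d + 1) ≤ 1 := (hset _ (by omega)).1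
      have hwn : ‖w‖ ≤ (m : ℝ) + 1 := by
        have h3 := norm_add_le (w - z) z
        rw [sub_add_cancel] at h3
        linarith
      have hGw : ‖tail θ (N₀ + 1) d w‖ ≤ (m : ℝ) + 2 := by
        have h1' := (hset (N₀ + 1) (by omega)).2 d w (by linarith)
        have h2' := norm_add_le (tail θ (N₀ + 1) d w - w) w
        rw [sub_add_cancel] at h2'
        have := (hset (N₀ + 1) (by omega)).1
        linarith
      have hGz : ‖tail θ (N₀ + 1) d z‖ ≤ (m : ℝ) + 2 := by
        have h1' := (hset (N₀ + 1) (by omega)).2 d z (by linarith)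
        have h2' := norm_add_le (tail θ (N₀ + 1) d z - z) z
        rw [sub_add_cancel] at h2'
        have := (hset (N₀ + 1) (by omega)).1
        linarith
      calc ‖thcomp θ (N₀ + 1 + d + (e + 1)) z - thcomp θ (N₀ + 1 + d) z‖
          = ‖P (tail θ (N₀ + 1) d w) - P (tail θ (N₀ + 1) d z)‖ := by rw [h1, h2]
        _ ≤ Lp * ‖tail θ (N₀ + 1) d w - tail θ (N₀ + 1) d z‖ := hPlip _ _ hGw hGz
        _ ≤ Lp * (Lg * ‖w - z‖) := by
            refine mul_le_mul_of_nonneg_left ?_ hLpnn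
            exact hGlip (N₀ + 1) (by omega) d w z hwn (by linarith)
        _ ≤ Lp * (Lg * t (N₀ + 1 + d + 1)) := by
            refine mul_le_mul_of_nonneg_left (mul_le_mul_of_nonneg_left hw hLgnn) hLpnn
        _ = Lp * Lg * t (N₀ + 1 + d + 1) := by ring
end Main

section Main2
variable {k : ℕ} (θ : ℕ → ((Fin k → ℂ) ≃ (Fin k → ℂ)))

lemma keyd_lemma (hdiff : ∀ n, Differentiable ℂ (θ n))
    (hsum : ∀ m : ℕ, 1 ≤ m → ∃ c : ℕ → ℝ, Summable c ∧
      ∀ n : ℕ, ∀ z : Fin k → ℂ, ‖z‖ ≤ (m : ℝ) → ‖θ n z - z‖ ≤ c n)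
    (m : ℕ) (hm : 1 ≤ m) :
    ∃ (u : ℕ → ℝ) (N₁ : ℕ), Filter.Tendsto u Filter.atTop (nhds 0) ∧
      ∀ (N d : ℕ) (z : Fin k → ℂ), N₁ ≤ N → ‖z‖ ≤ (m : ℝ) →
        ‖fderiv ℂ (thcomp θ (N + d)) z - fderiv ℂ (thcomp θ N) z‖ ≤ 2 * u N := by
  obtain ⟨u, N₁, htu, hunn, hkey⟩ := key_lemma θ hdiff hsum (m + 1) (by omega)
  refine ⟨u, N₁, htu, ?_⟩
  intro N d z hN hz
  have hsub : Differentiable ℂ (fun x => thcomp θ (N + d) x - thcomp θ N x) :=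
    (thcomp_diff θ hdiff _).sub (thcomp_diff θ hdiff _)
  have hb : ∀ x : Fin k → ℂ, ‖x‖ ≤ (m : ℝ) + 1 → ‖thcomp θ (N + d) x - thcomp θ N x‖ ≤ u N := by
    intro x hx
    refine hkey N d x hN ?_
    push_cast
    linarith
  have h := deriv_aux hsub (hunn N) (show (m : ℝ) < (m : ℝ) + 1 by linarith) hb hz
  rw [fderiv_fun_sub ((thcomp_diff θ hdiff (N + d)) z) ((thcomp_diff θ hdiff N) z),
    show ((m : ℝ) + 1) - (m : ℝ) = 1 by ring, div_one] at h
  exact h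

end Main2

/-- Lemma 8.3 of Dixon–Esterle: if the deviations of the automorphisms
`θ_n` from the identity are summable on every ball, then the compositions
`θ_0 ∘ ⋯ ∘ θ_n` converge locally uniformly to an injective entire map. -/
theorem stmt17 (k : ℕ) (hk : 2 ≤ k) (θ : ℕ → ((Fin k → ℂ) ≃ (Fin k → ℂ)))
    (hdiff : ∀ n, Differentiable ℂ (θ n)) (hdiffinv : ∀ n, Differentiable ℂ (θ n).symm)
    (hsum : ∀ m : ℕ, 1 ≤ m → ∃ c : ℕ → ℝ, Summable c ∧
      ∀ n : ℕ, ∀ z : Fin k → ℂ, ‖z‖ ≤ (m : ℝ) → ‖θ n z - z‖ ≤ c n) :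
    ∃ F : (Fin k → ℂ) → (Fin k → ℂ), Function.Injective F ∧ Differentiable ℂ F ∧
      ∀ C : Set (Fin k → ℂ), IsCompact C →
        TendstoUniformlyOn (fun n => thcomp θ n) F Filter.atTop C := by
  -- uniform Cauchy of the compositions on every ball
  have ucs : ∀ m : ℕ, 1 ≤ m →
      UniformCauchySeqOn (fun N => thcomp θ N) Filter.atTop (closedBall 0 (m : ℝ)) := by
    intro m hm
    obtain ⟨u, N₁, htu, hunn, hkey⟩ := key_lemma θ hdiff hsum m hm
    rw [Metric.uniformCauchySeqOn_iff]
    intro ε hε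
    have hev := htu.eventually (gt_mem_nhds hε)
    rw [Filter.eventually_atTop] at hev
    obtain ⟨N₂, hN₂⟩ := hev
    refine ⟨max N₁ N₂, fun i hi j hj x hx => ?_⟩
    rw [mem_closedBall, dist_zero_right] at hx
    rcases le_total i j with hij | hij
    · obtain ⟨d, rfl⟩ : ∃ d, j = i + d := ⟨j - i, by omega⟩
      rw [dist_comm, dist_eq_norm]
      exact lt_of_le_of_lt (hkey i d x (le_trans (le_max_left _ _) hi) hx)
        (hN₂ i (le_trans (le_max_right _ _) hi))
    · obtain ⟨d, rfl⟩ : ∃ d, i = j + d := ⟨i - j, by omega⟩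
      rw [dist_eq_norm]
      exact lt_of_le_of_lt (hkey j d x (le_trans (le_max_left _ _) hj) hx)
        (hN₂ j (le_trans (le_max_right _ _) hj))
  -- uniform Cauchy of the derivatives on every ball
  have ucsd : ∀ m : ℕ, 1 ≤ m →
      UniformCauchySeqOn (fun N x => fderiv ℂ (thcomp θ N) x) Filter.atTop
        (closedBall 0 (m : ℝ)) := by
    intro m hm
    obtain ⟨u, N₁, htu, hkey⟩ := keyd_lemma θ hdiff hsum m hm
    rw [Metric.uniformCauchySeqOn_iff]
    intro ε hε
    have htu2 : Filter.Tendsto (fun n => 2 * u n) Filter.atTop (nhds 0) := by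
      simpa using htu.const_mul 2
    have hev := htu2.eventually (gt_mem_nhds hε)
    rw [Filter.eventually_atTop] at hev
    obtain ⟨N₂, hN₂'⟩ := hev
    refine ⟨max N₁ N₂, fun i hi j hj x hx => ?_⟩
    rw [mem_closedBall, dist_zero_right] at hx
    rcases le_total i j with hij | hij
    · obtain ⟨d, rfl⟩ : ∃ d, j = i + d := ⟨j - i, by omega⟩
      rw [dist_comm, dist_eq_norm]
      exact lt_of_le_of_lt (hkey i d x (le_trans (le_max_left _ _) hi) hx)
        (hN₂' i (le_trans (le_max_right _ _) hi))
    · obtain ⟨d, rfl⟩ : ∃ d, i = j + d := ⟨i - j, by omega⟩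
      rw [dist_eq_norm]
      exact lt_of_le_of_lt (hkey j d x (le_trans (le_max_left _ _) hj) hx)
        (hN₂' j (le_trans (le_max_right _ _) hj))
  -- membership in balls
  have hball : ∀ z : Fin k → ℂ, ∃ m : ℕ, 1 ≤ m ∧ ‖z‖ ≤ (m : ℝ) := by
    intro z
    refine ⟨max 1 ⌈‖z‖⌉₊, le_max_left _ _, ?_⟩
    calc ‖z‖ ≤ (⌈‖z‖⌉₊ : ℝ) := Nat.le_ceil _
      _ ≤ ((max 1 ⌈‖z‖⌉₊ : ℕ) : ℝ) := by exact_mod_cast Nat.le_max_right 1 _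
  -- pointwise limits
  have hptc : ∀ z : Fin k → ℂ, ∃ L, Filter.Tendsto (fun N => thcomp θ N z)
      Filter.atTop (nhds L) := by
    intro z
    obtain ⟨m, hm, hzm⟩ := hball z
    apply cauchySeq_tendsto_of_complete
    have hz : z ∈ closedBall (0 : Fin k → ℂ) (m : ℝ) := by
      rw [mem_closedBall, dist_zero_right]; exact hzm
    rw [Metric.cauchySeq_iff]
    intro ε hε
    obtain ⟨N, hN⟩ := Metric.uniformCauchySeqOn_iff.1 (ucs m hm) ε hε
    exact ⟨N, fun i hi j hj => hN i hi j hj z hz⟩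
  choose F hF using hptc
  have hptcd : ∀ z : Fin k → ℂ, ∃ L, Filter.Tendsto (fun N => fderiv ℂ (thcomp θ N) z)
      Filter.atTop (nhds L) := by
    intro z
    obtain ⟨m, hm, hzm⟩ := hball z
    apply cauchySeq_tendsto_of_complete
    have hz : z ∈ closedBall (0 : Fin k → ℂ) (m : ℝ) := by
      rw [mem_closedBall, dist_zero_right]; exact hzm
    rw [Metric.cauchySeq_iff]
    intro ε hε
    obtain ⟨N, hN⟩ := Metric.uniformCauchySeqOn_iff.1 (ucsd m hm) ε hε
    exact ⟨N, fun i hi j hj => hN i hi j hj z hz⟩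
  choose F' hF' using hptcd
  refine ⟨F, ?_, ?_, ?_⟩
  · -- injectivity
    intro z w hzw
    by_contra hne
    have hδ : 0 < ‖z - w‖ := norm_pos_iff.2 (sub_ne_zero.2 hne)
    set δ := ‖z - w‖ with hδ_def
    obtain ⟨m, hm, hzm⟩ := hball z
    obtain ⟨m', hm', hwm⟩ := hball w
    set M := max m m' with hM_def
    have hM1 : 1 ≤ M := le_trans hm (Nat.le_max_left _ _)
    have hzM : ‖z‖ ≤ (M : ℝ) := hzm.trans (by exact_mod_cast Nat.le_max_left m m')
    have hwM : ‖w‖ ≤ (M : ℝ) := hwm.trans (by exact_mod_cast Nat.le_max_right m m')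
    obtain ⟨t, htnn, htend, N₀, hset⟩ := setup_lemma θ hsum M hM1
    have hev := htend.eventually (gt_mem_nhds (show (0:ℝ) < δ / 4 by linarith))
    rw [Filter.eventually_atTop] at hev
    obtain ⟨N₂, hN₂⟩ := hev
    set a := max N₀ N₂ with ha_def
    have haN₀ : N₀ ≤ a + 1 := le_trans (Nat.le_max_left _ _) (Nat.le_succ_of_le le_rfl)
    have htδ : t (a + 1) ≤ δ / 4 := (hN₂ (a + 1) (le_trans (Nat.le_max_right _ _) (Nat.le_succ _))).le
    have ht1 : t (a + 1) ≤ 1 := (hset (a + 1) haN₀).1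
    set P : (Fin k → ℂ) → (Fin k → ℂ) := tail θ 0 a with hP_def
    have hPinj : Function.Injective P := by
      rw [hP_def, ← thcomp_eq]
      exact thcomp_inj θ a
    have hPcont : Continuous P := (tail_diff θ hdiff a 0).continuous
    -- drift estimates for the tail maps
    have hdrift : ∀ d, ∀ x : Fin k → ℂ, ‖x‖ ≤ (M : ℝ) →
        ‖tail θ (a + 1) d x - x‖ ≤ δ / 4 ∧ ‖tail θ (a + 1) d x‖ ≤ (M : ℝ) + 1 := by
      intro d x hx
      have h1 := (hset (a + 1) haN₀).2 d x (by linarith)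
      have h2 := norm_add_le (tail θ (a + 1) d x - x) x
      rw [sub_add_cancel] at h2
      exact ⟨h1.trans htδ, by linarith⟩
    -- compact set and minimum
    set K : Set ((Fin k → ℂ) × (Fin k → ℂ)) :=
      (closedBall 0 ((M : ℝ) + 1) ×ˢ closedBall 0 ((M : ℝ) + 1)) ∩
        {p | δ / 2 ≤ ‖p.1 - p.2‖} with hK_def
    have hKc : IsCompact K := by
      refine ((isCompact_closedBall _ _).prod (isCompact_closedBall _ _)).inter_right ?_
      exact isClosed_le continuous_const (continuous_fst.sub continuous_snd).norm
    have hKne : K.Nonempty := by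
      refine ⟨(z, w), ⟨?_, ?_⟩, ?_⟩
      · rw [mem_closedBall, dist_zero_right]; linarith
      · rw [mem_closedBall, dist_zero_right]; linarith
      · show δ / 2 ≤ ‖z - w‖; linarith
    obtain ⟨p₀, hp₀K, hp₀min⟩ := hKc.exists_isMinOn hKne
      ((hPcont.comp continuous_fst).sub (hPcont.comp continuous_snd)).norm.continuousOn
    set δ' := ‖P p₀.1 - P p₀.2‖ with hδ'_def
    have hδ'pos : 0 < δ' := by
      rw [hδ'_def]
      refine norm_pos_iff.2 (sub_ne_zero.2 fun hc => ?_)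
      have hne12 : p₀.1 ≠ p₀.2 := by
        intro h12
        have := hp₀K.2
        rw [Set.mem_setOf_eq, h12, sub_self, norm_zero] at this
        linarith
      exact hne12 (hPinj hc)
    have hlow : ∀ d : ℕ, δ' ≤ ‖thcomp θ (a + 1 + d) z - thcomp θ (a + 1 + d) w‖ := by
      intro d
      have hsplit : thcomp θ (a + 1 + d) = fun x => P (tail θ (a + 1) d x) := by
        rw [thcomp_eq, show a + 1 + d = a + d + 1 by omega, tail_split θ a d 0, Nat.zero_add]
        rfl
      rw [hsplit]
      obtain ⟨hu1, hu2⟩ := hdrift d z hzM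
      obtain ⟨hv1, hv2⟩ := hdrift d w hwM
      have hmem : (tail θ (a + 1) d z, tail θ (a + 1) d w) ∈ K := by
        refine ⟨⟨?_, ?_⟩, ?_⟩
        · rw [mem_closedBall, dist_zero_right]; exact hu2
        · rw [mem_closedBall, dist_zero_right]; exact hv2
        · show δ / 2 ≤ ‖tail θ (a + 1) d z - tail θ (a + 1) d w‖
          have htri : δ ≤ ‖tail θ (a + 1) d z - tail θ (a + 1) d w‖ + δ / 4 + δ / 4 := by
            have h3 : z - w = (z - tail θ (a + 1) d z) + (tail θ (a + 1) d z - tail θ (a + 1) d w)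
                + (tail θ (a + 1) d w - w) := by abel
            calc δ = ‖z - w‖ := rfl
              _ ≤ ‖z - tail θ (a + 1) d z‖ + ‖tail θ (a + 1) d z - tail θ (a + 1) d w‖
                  + ‖tail θ (a + 1) d w - w‖ := by
                    rw [h3]
                    exact (norm_add_le _ _).trans (by gcongr; exact norm_add_le _ _)
              _ ≤ δ / 4 + ‖tail θ (a + 1) d z - tail θ (a + 1) d w‖ + δ / 4 := by
                    have hu1' : ‖z - tail θ (a + 1) d z‖ ≤ δ / 4 := by
                      rw [norm_sub_rev]; exact hu1
                    linarith
              _ = ‖tail θ (a + 1) d z - tail θ (a + 1) d w‖ + δ / 4 + δ / 4 := by ring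
          linarith
      simpa using hp₀min hmem
    have htendsub : Filter.Tendsto
        (fun d => ‖thcomp θ (a + 1 + d) z - thcomp θ (a + 1 + d) w‖)
        Filter.atTop (nhds ‖F z - F w‖) := by
      have h1 : Filter.Tendsto (fun d => a + 1 + d) Filter.atTop Filter.atTop := by
        apply Filter.tendsto_atTop_mono (fun d => Nat.le_add_left d (a + 1))
        exact Filter.tendsto_id
      exact (((hF z).comp h1).sub ((hF w).comp h1)).norm
    have : δ' ≤ ‖F z - F w‖ := ge_of_tendsto htendsub (Filter.Eventually.of_forall hlow)
    rw [hzw, sub_self, norm_zero] at this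
    linarith
  · -- differentiability
    intro z
    obtain ⟨m, hm, hzm⟩ := hball z
    have hzball : z ∈ ball (0 : Fin k → ℂ) ((m : ℝ) + 1) := by
      rw [mem_ball, dist_zero_right]; linarith
    have hsubset : ball (0 : Fin k → ℂ) ((m : ℝ) + 1) ⊆ closedBall 0 (((m + 1 : ℕ)) : ℝ) := by
      intro x hx
      rw [mem_ball, dist_zero_right] at hx
      rw [mem_closedBall, dist_zero_right]
      push_cast
      linarith
    have htuf' : TendstoUniformlyOn (fun N x => fderiv ℂ (thcomp θ N) x) F' Filter.atTop
        (ball (0 : Fin k → ℂ) ((m : ℝ) + 1)) :=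
      ((ucsd (m + 1) (by omega)).tendstoUniformlyOn_of_tendsto fun x _ => hF' x).mono hsubset
    have hhas := hasFDerivAt_of_tendstoUniformlyOn isOpen_ball htuf'
      (fun N x _ => ((thcomp_diff θ hdiff N) x).hasFDerivAt)
      (fun x _ => hF x) hzball
    exact hhas.differentiableAt
  · -- uniform convergence on compacts
    intro C hC
    obtain ⟨r, hr⟩ := hC.isBounded.subset_closedBall 0
    set m := max 1 ⌈max r 0⌉₊ with hm_def
    have hm1 : 1 ≤ m := le_max_left _ _
    have hsub : C ⊆ closedBall 0 (m : ℝ) := by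
      refine hr.trans (closedBall_subset_closedBall ?_)
      calc r ≤ max r 0 := le_max_left _ _
        _ ≤ (⌈max r 0⌉₊ : ℝ) := Nat.le_ceil _
        _ ≤ (m : ℝ) := by exact_mod_cast Nat.le_max_right 1 _
    exact ((ucs m hm1).tendstoUniformlyOn_of_tendsto fun x _ => hF x).mono hsub
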